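/- Let G be a finite simple graph of maximum degree at most Δ ≥ 3 and let v be a vertex of G. Then for every k ≥ 1, the number of vertex subsets of G of size k that contain v and induce a connected subgraph of G is at most (eΔ)^{k−1}. -/

import Mathlib

open Finset

attribute [local instance] Classical.propDecidable

namespace Stmt19

variable {V : Type} [Fintype V] [DecidableEq V] [LinearOrder V]

/-- Sorted list of neighbors of `u`. -/
noncomputable def nbrs (G : SimpleGraph V) (u : V) : List V :=
  (G.neighborFinset u).sort (· ≤ ·)

/-- New vertices discovered when processing position `i` of the exploration list `L`. -/
noncomputable def disc (G : SimpleGraph V) (S : Finset V) (v : V) (L : List V) (i : ℕ) :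
    List V :=
  if i < L.length then
    (((G.neighborFinset (L.getD i v)) ∩ S) \ List.toFinset L).sort (· ≤ ·)
  else []

/-- BFS exploration of the induced subgraph on `S`, starting at `v`. -/
noncomputable def runL (G : SimpleGraph V) (S : Finset V) (v : V) : ℕ → List V
  | 0 => [v]
  | n+1 => runL G S v n ++ disc G S v (runL G S v n) n

variable (G : SimpleGraph V) (S : Finset V) (v : V)

lemma mem_disc {L : List V} {i : ℕ} {w : V} :
    w ∈ disc G S v L i ↔
      i < L.length ∧ w ∈ G.neighborFinset (L.getD i v) ∧ w ∈ S ∧ w ∉ L := by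
  unfold disc
  split
  · next h =>
    simp only [Finset.mem_sort, Finset.mem_sdiff, Finset.mem_inter, List.mem_toFinset]
    tauto
  · next h => simp; tauto

lemma disc_nodup (L : List V) (i : ℕ) : (disc G S v L i).Nodup := by
  unfold disc; split
  · exact Finset.sort_nodup _ _
  · exact List.nodup_nil

lemma runL_prefix {n m : ℕ} (h : n ≤ m) : runL G S v n <+: runL G S v m := by
  induction m with
  | zero => simp [Nat.le_zero.mp h]
  | succ m ih =>
    rcases Nat.lt_or_ge n (m+1) with h' | h'
    · exact (ih (Nat.lt_succ_iff.mp h')).trans (List.prefix_append _ _)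
    · have : n = m+1 := le_antisymm h h'
      subst this; exact List.prefix_refl _

lemma runL_subset (hv : v ∈ S) (n : ℕ) : ∀ x ∈ runL G S v n, x ∈ S := by
  induction n with
  | zero => intro x hx; simp only [runL, List.mem_singleton] at hx; subst hx; exact hv
  | succ n ih =>
    intro x hx
    rw [runL, List.mem_append] at hx
    rcases hx with hx | hx
    · exact ih x hx
    · exact ((mem_disc G S v).mp hx).2.2.1

lemma runL_nodup (n : ℕ) : (runL G S v n).Nodup := by
  induction n with
  | zero => simp [runL]
  | succ n ih =>
    rw [runL]
    refine List.Nodup.append ih (disc_nodup G S v _ _) ?_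
    intro x hx hx'
    exact ((mem_disc G S v).mp hx').2.2.2 hx

lemma runL_length_le (hv : v ∈ S) (n : ℕ) : (runL G S v n).length ≤ S.card := by
  have h1 : (runL G S v n).toFinset.card = (runL G S v n).length :=
    List.toFinset_card_of_nodup (runL_nodup G S v n)
  have h2 : (runL G S v n).toFinset ⊆ S := by
    intro x hx; exact runL_subset G S v hv n x (List.mem_toFinset.mp hx)
  calc (runL G S v n).length = (runL G S v n).toFinset.card := h1.symm
    _ ≤ S.card := Finset.card_le_card h2

lemma runL_stab {n : ℕ} (h : (runL G S v n).length ≤ n) :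
    ∀ m, n ≤ m → runL G S v m = runL G S v n := by
  intro m hm
  induction m with
  | zero => rw [Nat.le_zero.mp hm]
  | succ m ih =>
    rcases Nat.lt_or_ge n (m+1) with h' | h'
    · have hmeq := ih (Nat.lt_succ_iff.mp h')
      rw [runL, hmeq, disc, if_neg, List.append_nil]
      rw [hmeq] at *
      omega
    · exact (le_antisymm hm h') ▸ rfl

lemma runL_closed (hv : v ∈ S) {x y : V} (hx : x ∈ runL G S v S.card)
    (hy : y ∈ S) (hadj : G.Adj x y) : y ∈ runL G S v S.card := by
  set k := S.card with hk
  obtain ⟨i, hi, hix⟩ := List.mem_iff_getElem.mp hx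
  have hlenk : (runL G S v k).length ≤ k := runL_length_le G S v hv k
  have hik : i < k := lt_of_lt_of_le hi hlenk
  rcases Nat.lt_or_ge i (runL G S v i).length with hlt | hge
  · have hpre : runL G S v i <+: runL G S v k := runL_prefix G S v hik.le
    have hgetx : (runL G S v i)[i]'hlt = x := by
      rw [hpre.getElem hlt]; exact hix
    by_cases hyin : y ∈ runL G S v i
    · exact (runL_prefix G S v hik.le).subset hyin
    · have hdisc : y ∈ disc G S v (runL G S v i) i := by
        rw [mem_disc]
        refine ⟨hlt, ?_, hy, hyin⟩
        have : (runL G S v i).getD i v = x := by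
          simp [List.getD_eq_getElem?_getD, List.getElem?_eq_getElem hlt, hgetx]
        rw [this, SimpleGraph.mem_neighborFinset]
        exact hadj
      have : y ∈ runL G S v (i+1) := by
        rw [runL, List.mem_append]; exact Or.inr hdisc
      exact (runL_prefix G S v hik).subset this
  · exfalso
    have := runL_stab G S v hge k hik.le
    rw [this] at hi
    omega

lemma runL_complete (hv : v ∈ S) (hconn : (G.induce (↑S : Set V)).Connected) :
    (runL G S v S.card).toFinset = S := by
  apply Finset.Subset.antisymm
  · intro x hx
    exact runL_subset G S v hv _ x (List.mem_toFinset.mp hx)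
  · intro w hw
    have hreach := hconn.preconnected ⟨v, by simpa using hv⟩ ⟨w, by simpa using hw⟩
    obtain ⟨p⟩ := hreach
    rw [List.mem_toFinset]
    have key : ∀ (a b : (↑S : Set V)) (q : (G.induce (↑S : Set V)).Walk a b),
        (a : V) ∈ runL G S v S.card → (b : V) ∈ runL G S v S.card := by
      intro a b q
      induction q with
      | nil => exact id
      | cons h q ih =>
        intro ha
        apply ih
        have hadj : G.Adj _ _ := h
        exact runL_closed G S v hv ha (by simpa using (‹_› : (↑S : Set V)) |>.2) hadj
    have hv0 : (v : V) ∈ runL G S v S.card := by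
      have : v ∈ runL G S v 0 := by simp [runL]
      exact (runL_prefix G S v (Nat.zero_le _)).subset this
    exact key _ _ p hv0

lemma runL_index (hv : v ∈ S) (hconn : (G.induce (↑S : Set V)).Connected)
    {n : ℕ} (hn : n < S.card) : n < (runL G S v n).length := by
  by_contra h
  push_neg at h
  have hstab := runL_stab G S v h S.card (le_of_lt hn)
  have hcomp := runL_complete G S v hv hconn
  have : (runL G S v S.card).toFinset.card = (runL G S v S.card).length :=
    List.toFinset_card_of_nodup (runL_nodup G S v _)
  rw [hcomp] at this
  rw [hstab] at this
  omega

lemma runL_pred_length (hv : v ∈ S) (hconn : (G.induce (↑S : Set V)).Connected) :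
    (runL G S v (S.card - 1)).length = S.card := by
  have hpos : 0 < S.card := Finset.card_pos.mpr ⟨v, hv⟩
  have h1 := runL_index G S v hv hconn (n := S.card - 1) (by omega)
  have h2 := runL_length_le G S v hv (S.card - 1)
  omega

lemma runL_pred_complete (hv : v ∈ S) (hconn : (G.induce (↑S : Set V)).Connected) :
    (runL G S v (S.card - 1)).toFinset = S := by
  apply Finset.eq_of_subset_of_card_le
  · intro x hx; exact runL_subset G S v hv _ x (List.mem_toFinset.mp hx)
  · have := List.toFinset_card_of_nodup (runL_nodup G S v (S.card - 1))
    rw [this, runL_pred_length G S v hv hconn]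

lemma runL_length_eq_sum (n : ℕ) :
    (runL G S v n).length = 1 + ∑ i ∈ range n, (disc G S v (runL G S v i) i).length := by
  induction n with
  | zero => simp [runL]
  | succ n ih =>
    rw [runL, List.length_append, ih, Finset.sum_range_succ]
    ring

/-- The block of code bits contributed by step `i`. -/
noncomputable def block (Δ : ℕ) (i : ℕ) : Finset ℕ :=
  (disc G S v (runL G S v i) i).toFinset.image
    (fun w => i * Δ + (nbrs G ((runL G S v i).getD i v)).idxOf w)

/-- The code of the connected set `S`. -/
noncomputable def code (Δ k : ℕ) : Finset ℕ :=
  (range (k-1)).biUnion (block G S v Δ)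

lemma disc_mem_nbrs {i : ℕ} {w : V} (hw : w ∈ disc G S v (runL G S v i) i) :
    w ∈ nbrs G ((runL G S v i).getD i v) := by
  have := ((mem_disc G S v).mp hw).2.1
  simpa [nbrs, Finset.mem_sort] using this

lemma block_bounds {Δ : ℕ} (hdeg : ∀ u : V, G.degree u ≤ Δ) {i : ℕ} {p : ℕ}
    (hp : p ∈ block G S v Δ i) : i * Δ ≤ p ∧ p < i * Δ + Δ := by
  simp only [block, Finset.mem_image, List.mem_toFinset] at hp
  obtain ⟨w, hw, rfl⟩ := hp
  have hmem := disc_mem_nbrs G S v hw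
  have hidx : (nbrs G ((runL G S v i).getD i v)).idxOf w
      < (nbrs G ((runL G S v i).getD i v)).length := List.idxOf_lt_length_iff.mpr hmem
  have hlen : (nbrs G ((runL G S v i).getD i v)).length ≤ Δ := by
    rw [nbrs, Finset.length_sort, SimpleGraph.card_neighborFinset_eq_degree]
    exact hdeg _
  omega

lemma block_card {Δ : ℕ} (i : ℕ) :
    (block G S v Δ i).card = (disc G S v (runL G S v i) i).length := by
  rw [block]
  rw [Finset.card_image_of_injOn, List.toFinset_card_of_nodup (disc_nodup G S v _ _)]
  intro a ha b hb hab
  simp only [Finset.mem_coe, List.mem_toFinset] at ha hb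
  have ha' := disc_mem_nbrs G S v ha
  have hb' := disc_mem_nbrs G S v hb
  have hab2 : i * Δ + (nbrs G ((runL G S v i).getD i v)).idxOf a
      = i * Δ + (nbrs G ((runL G S v i).getD i v)).idxOf b := hab
  have : (nbrs G ((runL G S v i).getD i v)).idxOf a
      = (nbrs G ((runL G S v i).getD i v)).idxOf b := by omega
  exact (List.idxOf_inj ha').mp this

lemma code_card {Δ k : ℕ} (hΔ : 0 < Δ) (hdeg : ∀ u : V, G.degree u ≤ Δ)
    (hv : v ∈ S) (hcard : S.card = k) (hconn : (G.induce (↑S : Set V)).Connected) :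
    (code G S v Δ k).card = k - 1 := by
  rw [code, Finset.card_biUnion]
  · have : ∀ i ∈ range (k-1), (block G S v Δ i).card
        = (disc G S v (runL G S v i) i).length := fun i _ => block_card G S v i
    rw [Finset.sum_congr rfl this]
    have hlen := runL_length_eq_sum G S v (k-1)
    have hlen2 : (runL G S v (k-1)).length = k := by
      rw [← hcard]
      rw [← hcard] at *
      exact runL_pred_length G S v hv hconn
    omega
  · intro i _ j _ hij
    rw [Function.onFun, Finset.disjoint_left]
    intro p hpi hpj
    have h1 := block_bounds G S v hdeg hpi
    have h2 := block_bounds G S v hdeg hpj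
    rcases Nat.lt_or_ge i j with h | h
    · have : i + 1 ≤ j := h
      nlinarith [h1.1, h1.2, h2.1, h2.2]
    · have : i ≠ j := hij
      have hj : j < i := by omega
      have : j + 1 ≤ i := hj
      nlinarith [h1.1, h1.2, h2.1, h2.2]

lemma code_subset_range {Δ k : ℕ} (hdeg : ∀ u : V, G.degree u ≤ Δ) :
    code G S v Δ k ⊆ range (Δ * (k-1)) := by
  intro p hp
  rw [code, Finset.mem_biUnion] at hp
  obtain ⟨i, hi, hpi⟩ := hp
  rw [Finset.mem_range] at hi ⊢
  have := block_bounds G S v hdeg hpi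
  nlinarith [this.1, this.2]

lemma mem_block_iff {Δ i : ℕ} {p : ℕ} :
    p ∈ block G S v Δ i ↔ ∃ w ∈ disc G S v (runL G S v i) i,
      p = i * Δ + (nbrs G ((runL G S v i).getD i v)).idxOf w := by
  simp only [block, Finset.mem_image, List.mem_toFinset]
  constructor
  · rintro ⟨w, hw, rfl⟩; exact ⟨w, hw, rfl⟩
  · rintro ⟨w, hw, rfl⟩; exact ⟨w, hw, rfl⟩

lemma indexOf_lt {Δ : ℕ} (hdeg : ∀ u : V, G.degree u ≤ Δ) {u w : V}
    (hw : w ∈ nbrs G u) : (nbrs G u).idxOf w < Δ := by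
  have hidx : (nbrs G u).idxOf w < (nbrs G u).length := List.idxOf_lt_length_iff.mpr hw
  have hlen : (nbrs G u).length ≤ Δ := by
    rw [nbrs, Finset.length_sort, SimpleGraph.card_neighborFinset_eq_degree]
    exact hdeg _
  omega

lemma disc_mem_of_code_subset {Δ k : ℕ} (hdeg : ∀ u : V, G.degree u ≤ Δ)
    {S₁ S₂ : Finset V} (hcode : code G S₁ v Δ k ⊆ code G S₂ v Δ k)
    {n : ℕ} (hn : n < k - 1) (hL : runL G S₁ v n = runL G S₂ v n)
    {w : V} (hw : w ∈ disc G S₁ v (runL G S₁ v n) n) :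
    w ∈ disc G S₂ v (runL G S₂ v n) n := by
  set u := (runL G S₁ v n).getD n v with hu
  have hp1 : n * Δ + (nbrs G u).idxOf w ∈ block G S₁ v Δ n :=
    (mem_block_iff G S₁ v).mpr ⟨w, hw, rfl⟩
  have hp2 : n * Δ + (nbrs G u).idxOf w ∈ code G S₂ v Δ k := by
    apply hcode
    rw [code, Finset.mem_biUnion]
    exact ⟨n, Finset.mem_range.mpr hn, hp1⟩
  rw [code, Finset.mem_biUnion] at hp2
  obtain ⟨j, hj, hpj⟩ := hp2
  obtain ⟨w', hw', heq⟩ := (mem_block_iff G S₂ v).mp hpj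
  have hsw : (nbrs G u).idxOf w < Δ := indexOf_lt G hdeg (disc_mem_nbrs G S₁ v hw)
  have hsw' : (nbrs G ((runL G S₂ v j).getD j v)).idxOf w' < Δ :=
    indexOf_lt G hdeg (disc_mem_nbrs G S₂ v hw')
  have hjn : j = n := by
    by_contra hne
    rcases Nat.lt_or_ge j n with h | h
    · have h1 : j + 1 ≤ n := h
      have : (j+1) * Δ ≤ n * Δ := Nat.mul_le_mul_right Δ h1
      rw [add_one_mul] at this
      omega
    · have hne' : n < j := by omega
      have h1 : n + 1 ≤ j := hne'
      have : (n+1) * Δ ≤ j * Δ := Nat.mul_le_mul_right Δ h1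
      rw [add_one_mul] at this
      omega
  subst hjn
  have hu' : (runL G S₂ v j).getD j v = u := by rw [← hL]
  rw [hu'] at heq hsw'
  have hidx : (nbrs G u).idxOf w = (nbrs G u).idxOf w' := by omega
  have hw'mem : w' ∈ nbrs G u := by rw [← hu']; exact disc_mem_nbrs G S₂ v hw'
  have : w = w' := (List.idxOf_inj (disc_mem_nbrs G S₁ v hw)).mp hidx
  subst this
  exact hw'

lemma disc_eq_of_code_eq {Δ k : ℕ} (hdeg : ∀ u : V, G.degree u ≤ Δ)
    {S₁ S₂ : Finset V} (hcode : code G S₁ v Δ k = code G S₂ v Δ k)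
    {n : ℕ} (hn : n < k - 1) (hL : runL G S₁ v n = runL G S₂ v n) :
    disc G S₁ v (runL G S₁ v n) n = disc G S₂ v (runL G S₂ v n) n := by
  have h12 := fun w hw => disc_mem_of_code_subset G v hdeg hcode.le hn hL (w := w) hw
  have h21 := fun w hw => disc_mem_of_code_subset G v hdeg hcode.ge hn hL.symm (w := w) hw
  have hnd1 := disc_nodup G S₁ v (runL G S₁ v n) n
  have hnd2 := disc_nodup G S₂ v (runL G S₂ v n) n
  have hperm := (List.perm_ext_iff_of_nodup hnd1 hnd2).mpr fun w => ⟨h12 w, h21 w⟩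
  have hs1 : (disc G S₁ v (runL G S₁ v n) n).Pairwise (· ≤ ·) := by
    unfold disc; split
    · exact Finset.pairwise_sort _ _
    · exact List.Pairwise.nil
  have hs2 : (disc G S₂ v (runL G S₂ v n) n).Pairwise (· ≤ ·) := by
    unfold disc; split
    · exact Finset.pairwise_sort _ _
    · exact List.Pairwise.nil
  exact List.Perm.eq_of_pairwise' hs1 hs2 hperm

lemma runL_eq_of_code_eq {Δ k : ℕ} (hdeg : ∀ u : V, G.degree u ≤ Δ)
    {S₁ S₂ : Finset V} (hcode : code G S₁ v Δ k = code G S₂ v Δ k) :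
    ∀ n ≤ k - 1, runL G S₁ v n = runL G S₂ v n := by
  intro n hn
  induction n with
  | zero => rfl
  | succ n ih =>
    have hn' : n < k - 1 := by omega
    have hL := ih (by omega)
    show runL G S₁ v n ++ _ = runL G S₂ v n ++ _
    rw [hL, ← disc_eq_of_code_eq G v hdeg hcode hn' hL]
    rw [hL]

lemma code_inj {Δ k : ℕ} (hdeg : ∀ u : V, G.degree u ≤ Δ)
    {S₁ S₂ : Finset V}
    (hv1 : v ∈ S₁) (hc1 : S₁.card = k) (hcn1 : (G.induce (↑S₁ : Set V)).Connected)
    (hv2 : v ∈ S₂) (hc2 : S₂.card = k) (hcn2 : (G.induce (↑S₂ : Set V)).Connected)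
    (hcode : code G S₁ v Δ k = code G S₂ v Δ k) : S₁ = S₂ := by
  have h1 := runL_pred_complete G S₁ v hv1 hcn1
  have h2 := runL_pred_complete G S₂ v hv2 hcn2
  rw [hc1] at h1
  rw [hc2] at h2
  rw [← h1, ← h2, runL_eq_of_code_eq G v hdeg hcode (k-1) le_rfl]

end Stmt19

lemma choose_bound (D m : ℕ) : (((D*m).choose m : ℕ) : ℝ) ≤ (Real.exp 1 * D)^m := by
  have h1 : (((D*m).choose m : ℕ) : ℝ) ≤ ((D*m : ℕ) : ℝ)^m / (m.factorial : ℝ) :=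
    Nat.choose_le_pow_div m (D*m)
  have h2 : ((m:ℝ))^m / (m.factorial : ℝ) ≤ Real.exp m := by
    have hs := Real.sum_le_exp_of_nonneg (x := (m:ℝ)) (by positivity) (m+1)
    refine le_trans ?_ hs
    have he : ((m:ℝ))^m / (m.factorial : ℝ)
        = ∑ i ∈ Finset.range (m+1), (if i = m then ((m:ℝ))^i / (i.factorial : ℝ) else 0) := by
      simp
    rw [he]
    refine Finset.sum_le_sum fun i _ => ?_
    split
    · next h => subst h; simp
    · positivity
  calc (((D*m).choose m : ℕ) : ℝ) ≤ ((D*m : ℕ) : ℝ)^m / (m.factorial : ℝ) := h1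
    _ = (D:ℝ)^m * (((m:ℝ))^m / (m.factorial : ℝ)) := by push_cast; ring
    _ ≤ (D:ℝ)^m * Real.exp m := mul_le_mul_of_nonneg_left h2 (by positivity)
    _ = (Real.exp 1 * D)^m := by
        rw [mul_pow, ← Real.exp_nat_mul]
        ring_nf

/-- Borgs–Chayes–Kahn–Lovász: in a graph of maximum degree at most `Δ ≥ 3`,
the number of vertex subsets of size `k` containing a fixed vertex `v` and inducing a
connected subgraph is at most `(eΔ)^{k-1}`. -/
theorem stmt_19 {V : Type} [Fintype V] [DecidableEq V] (G : SimpleGraph V) (Δ : ℕ)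
    (hΔ : 3 ≤ Δ) (hdeg : ∀ v : V, G.degree v ≤ Δ) (v : V) (k : ℕ) (hk : 1 ≤ k) :
    (((univ : Finset (Finset V)).filter
        (fun S : Finset V => v ∈ S ∧ S.card = k ∧ (G.induce (↑S : Set V)).Connected)).card : ℝ)
      ≤ (Real.exp 1 * (Δ : ℝ)) ^ (k - 1) := by
  classical
  letI : LinearOrder V := LinearOrder.lift' (Fintype.equivFin V) (Fintype.equivFin V).injective
  set m := k - 1 with hm
  have hΔ0 : 0 < Δ := by omega
  have key : ((univ : Finset (Finset V)).filter
        (fun S : Finset V => v ∈ S ∧ S.card = k ∧ (G.induce (↑S : Set V)).Connected)).card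
      ≤ (Δ * m).choose m := by
    have hmain := Finset.card_le_card_of_injOn (f := fun S : Finset V => Stmt19.code G S v Δ k)
      (s := (univ : Finset (Finset V)).filter
        (fun S : Finset V => v ∈ S ∧ S.card = k ∧ (G.induce (↑S : Set V)).Connected))
      (t := (range (Δ * m)).powersetCard m)
      (by
        intro S hS
        rw [Finset.mem_coe, Finset.mem_filter] at hS
        obtain ⟨-, hv, hcard, hconn⟩ := hS
        rw [Finset.mem_coe, Finset.mem_powersetCard]
        exact ⟨Stmt19.code_subset_range G S v hdeg,
          Stmt19.code_card G S v hΔ0 hdeg hv hcard hconn⟩)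
      (by
        intro S₁ hS₁ S₂ hS₂ hcode
        simp only [Finset.coe_filter, Set.mem_setOf_eq, Finset.mem_univ, true_and] at hS₁ hS₂
        exact Stmt19.code_inj G v hdeg hS₁.1 hS₁.2.1 hS₁.2.2 hS₂.1 hS₂.2.1 hS₂.2.2 hcode)
    rwa [Finset.card_powersetCard, Finset.card_range] at hmain
  calc (((univ : Finset (Finset V)).filter
        (fun S : Finset V => v ∈ S ∧ S.card = k ∧ (G.induce (↑S : Set V)).Connected)).card : ℝ)
      ≤ (((Δ * m).choose m : ℕ) : ℝ) := by exact_mod_cast key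
    _ ≤ (Real.exp 1 * (Δ : ℝ)) ^ m := choose_bound Δ m
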